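/- If h : D → ℝ is harmonic on a domain D ⊆ ℝⁿ and p > 0, then |h|^p is quasi-nearly subharmonic: there exists K ≥ 1 (depending only on n and p) such that |h(x)|^p ≤ (K/(νₙ rⁿ)) ∫_{B(x,r)} |h(y)|^p dm(y) for all closed balls B̄(x,r) ⊂ D. -/

import Mathlib

open MeasureTheory Metric Set

/-- The volume of the unit ball in `ℝⁿ`. -/
noncomputable def unitBallVol (n : ℕ) : ℝ :=
  (volume (ball (0 : EuclideanSpace ℝ (Fin n)) 1)).toReal

/-- A function is harmonic on an open set if it is continuous there and satisfies the mean value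
property on every closed ball contained in the set. -/
def HarmonicOnSet {n : ℕ} (h : EuclideanSpace ℝ (Fin n) → ℝ)
    (D : Set (EuclideanSpace ℝ (Fin n))) : Prop :=
  ContinuousOn h D ∧ ∀ x r, 0 < r → closedBall x r ⊆ D →
    h x = 1 / (unitBallVol n * r ^ n) * ∫ y in ball x r, h y

lemma unitBallVol_pos (n : ℕ) : 0 < unitBallVol n :=
  ENNReal.toReal_pos (measure_ball_pos _ _ one_pos).ne' measure_ball_lt_top.ne

lemma volume_ball_toReal {n : ℕ} (hn : 1 ≤ n) (x : EuclideanSpace ℝ (Fin n)) {r : ℝ}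
    (hr : 0 ≤ r) : (volume (ball x r)).toReal = unitBallVol n * r ^ n := by
  haveI : Nontrivial (EuclideanSpace ℝ (Fin n)) :=
    Module.nontrivial_of_finrank_pos (R := ℝ)
      (by rw [finrank_euclideanSpace_fin]; omega)
  rw [Measure.addHaar_ball volume x hr, finrank_euclideanSpace_fin, ENNReal.toReal_mul,
    ENNReal.toReal_ofReal (by positivity)]
  unfold unitBallVol; ring

lemma integrableOn_abs_rpow {n : ℕ} {D : Set (EuclideanSpace ℝ (Fin n))}
    {h : EuclideanSpace ℝ (Fin n) → ℝ} (hc : ContinuousOn h D)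
    {x : EuclideanSpace ℝ (Fin n)} {R : ℝ} (hsub : closedBall x R ⊆ D) {p : ℝ} (hp : 0 < p) :
    IntegrableOn (fun z => |h z| ^ p) (closedBall x R) := by
  exact (((hc.mono hsub).abs).rpow_const (fun z _ => Or.inr hp.le)).integrableOn_compact
    (isCompact_closedBall x R)

lemma integrableOn_abs {n : ℕ} {D : Set (EuclideanSpace ℝ (Fin n))}
    {h : EuclideanSpace ℝ (Fin n) → ℝ} (hc : ContinuousOn h D)
    {x : EuclideanSpace ℝ (Fin n)} {R : ℝ} (hsub : closedBall x R ⊆ D) :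
    IntegrableOn (fun z => |h z|) (closedBall x R) :=
  ((hc.mono hsub).abs).integrableOn_compact (isCompact_closedBall x R)

lemma step {n : ℕ} (hn : 1 ≤ n) {D : Set (EuclideanSpace ℝ (Fin n))}
    {h : EuclideanSpace ℝ (Fin n) → ℝ} (hc : ContinuousOn h D)
    (hmvp : ∀ x r, 0 < r → closedBall x r ⊆ D →
      h x = 1 / (unitBallVol n * r ^ n) * ∫ y in ball x r, h y)
    {x : EuclideanSpace ℝ (Fin n)} {R : ℝ} (hR : 0 < R) (hsub : closedBall x R ⊆ D)
    {p : ℝ} (hp : 0 < p) (hp1 : p ≤ 1)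
    {Mt s t : ℝ} (hs : 0 ≤ s) (hst : s < t) (htR : t ≤ R)
    (hMt : ∀ z ∈ closedBall x t, |h z| ≤ Mt)
    {y : EuclideanSpace ℝ (Fin n)} (hy : y ∈ closedBall x s) :
    |h y| ≤ (unitBallVol n * (t - s) ^ n)⁻¹ *
      (Mt ^ (1 - p) * ∫ z in ball x R, |h z| ^ p) := by
  have hν := unitBallVol_pos n
  set ρ := t - s with hρdef
  have hρ : 0 < ρ := by simp [hρdef]; linarith
  have hyt : closedBall y ρ ⊆ closedBall x t := by
    apply closedBall_subset_closedBall'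
    have : dist y x ≤ s := mem_closedBall.mp hy
    linarith
  have hsubD : closedBall y ρ ⊆ D :=
    hyt.trans ((closedBall_subset_closedBall htR).trans hsub)
  have hMt0 : 0 ≤ Mt := (abs_nonneg _).trans (hMt x (mem_closedBall_self (by linarith)))
  have hballt : ball y ρ ⊆ closedBall x t := ball_subset_closedBall.trans hyt
  have hballR : ball y ρ ⊆ ball x R := by
    intro z hz
    have h1 : dist z y < ρ := mem_ball.mp hz
    have h2 : dist y x ≤ s := mem_closedBall.mp hy
    have : dist z x < t := lt_of_le_of_lt (dist_triangle z y x) (by linarith)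
    exact mem_ball.mpr (lt_of_lt_of_le this htR)
  have hIa : IntegrableOn (fun z => |h z|) (closedBall x R) := integrableOn_abs hc hsub
  have hIp : IntegrableOn (fun z => |h z| ^ p) (closedBall x R) :=
    integrableOn_abs_rpow hc hsub hp
  have hIa' : IntegrableOn (fun z => |h z|) (ball y ρ) :=
    hIa.mono_set (hballR.trans ball_subset_closedBall)
  have hIp' : IntegrableOn (fun z => |h z| ^ p * Mt ^ (1 - p)) (ball y ρ) :=
    (hIp.mono_set (hballR.trans ball_subset_closedBall)).mul_const _
  have key : ∫ z in ball y ρ, |h z| ≤ Mt ^ (1 - p) * ∫ z in ball x R, |h z| ^ p := by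
    calc ∫ z in ball y ρ, |h z| ≤ ∫ z in ball y ρ, |h z| ^ p * Mt ^ (1 - p) := by
          apply setIntegral_mono_on hIa' hIp' measurableSet_ball
          intro z hz
          have hzt : |h z| ≤ Mt := hMt z (hballt hz)
          rcases eq_or_lt_of_le (abs_nonneg (h z)) with h0 | h0
          · rw [← h0, Real.zero_rpow hp.ne']
            positivity
          · calc |h z| = |h z| ^ p * |h z| ^ (1 - p) := by
                  rw [← Real.rpow_add h0, add_sub_cancel, Real.rpow_one]
              _ ≤ |h z| ^ p * Mt ^ (1 - p) := by
                  apply mul_le_mul_of_nonneg_left _ (Real.rpow_nonneg (abs_nonneg _) _)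
                  exact Real.rpow_le_rpow (abs_nonneg _) hzt (by linarith)
      _ = Mt ^ (1 - p) * ∫ z in ball y ρ, |h z| ^ p := by
          rw [integral_mul_const, mul_comm]
      _ ≤ Mt ^ (1 - p) * ∫ z in ball x R, |h z| ^ p := by
          apply mul_le_mul_of_nonneg_left _ (Real.rpow_nonneg hMt0 _)
          apply setIntegral_mono_set (hIp.mono_set ball_subset_closedBall)
            (Filter.Eventually.of_forall fun z => Real.rpow_nonneg (abs_nonneg _) _)
            (HasSubset.Subset.eventuallyLE hballR)
  have hmv := hmvp y ρ hρ hsubD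
  have hpos : (0:ℝ) < unitBallVol n * ρ ^ n := by positivity
  calc |h y| = (unitBallVol n * ρ ^ n)⁻¹ * |∫ z in ball y ρ, h z| := by
        rw [hmv, abs_mul, abs_of_pos (by positivity : (0:ℝ) < 1 / (unitBallVol n * ρ ^ n)),
          one_div]
    _ ≤ (unitBallVol n * ρ ^ n)⁻¹ * ∫ z in ball y ρ, |h z| := by
        apply mul_le_mul_of_nonneg_left _ (by positivity)
        simpa [Real.norm_eq_abs] using
          norm_integral_le_integral_norm (μ := volume.restrict (ball y ρ)) h
    _ ≤ (unitBallVol n * ρ ^ n)⁻¹ * (Mt ^ (1 - p) * ∫ z in ball x R, |h z| ^ p) := by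
        apply mul_le_mul_of_nonneg_left key (by positivity)

lemma main_le_one {n : ℕ} (hn : 1 ≤ n) {p : ℝ} (hp : 0 < p) (hp1 : p ≤ 1)
    {D : Set (EuclideanSpace ℝ (Fin n))} {h : EuclideanSpace ℝ (Fin n) → ℝ}
    (hc : ContinuousOn h D)
    (hmvp : ∀ x r, 0 < r → closedBall x r ⊆ D →
      h x = 1 / (unitBallVol n * r ^ n) * ∫ y in ball x r, h y)
    {x : EuclideanSpace ℝ (Fin n)} {R : ℝ} (hR : 0 < R) (hsub : closedBall x R ⊆ D) :
    |h x| ^ p ≤ ((2:ℝ) ^ ((n:ℝ) * (1 - p) / p) * 2 ^ (2 * n)) / (unitBallVol n * R ^ n) *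
      ∫ z in ball x R, |h z| ^ p := by
  have hν := unitBallVol_pos n
  set ν := unitBallVol n with hνdef
  set q := 1 - p with hq
  have hq0 : 0 ≤ q := by simp [hq]; linarith
  have hq1 : q < 1 := by simp [hq]; linarith
  set I := ∫ z in ball x R, |h z| ^ p with hI
  have hI0 : 0 ≤ I :=
    setIntegral_nonneg measurableSet_ball fun z _ => Real.rpow_nonneg (abs_nonneg _) p
  set m : ℝ → ℝ := fun s => sSup ((fun z => |h z|) '' closedBall x s) with hm
  have hmem : ∀ s, 0 ≤ s → s ≤ R → ∀ y ∈ closedBall x s, |h y| ≤ m s := by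
    intro s hs hsR y hy
    apply le_csSup
    · exact (isCompact_closedBall x s).bddAbove_image
        ((hc.mono ((closedBall_subset_closedBall hsR).trans hsub)).abs)
    · exact mem_image_of_mem _ hy
  have hm0 : ∀ s, 0 ≤ s → s ≤ R → 0 ≤ m s := fun s hs hsR =>
    (abs_nonneg _).trans (hmem s hs hsR x (mem_closedBall_self hs))
  have hrec : ∀ s t, 0 ≤ s → s < t → t ≤ R →
      m s ≤ (ν * (t - s) ^ n)⁻¹ * (m t ^ q * I) := by
    intro s t hs hst htR
    have hmt0 : 0 ≤ m t := hm0 t (le_trans hs hst.le) htR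
    apply Real.sSup_le
    · rintro _ ⟨y, hy, rfl⟩
      exact step hn hc hmvp hR hsub hp hp1 hs hst htR
        (hmem t (le_trans hs hst.le) htR) hy
    · have : (0:ℝ) < ν * (t - s) ^ n := by
        have : (0:ℝ) < t - s := by linarith
        positivity
      exact mul_nonneg (by positivity) (mul_nonneg (Real.rpow_nonneg hmt0 _) hI0)
  by_cases hIz : I = 0
  · have h1 := hrec 0 R le_rfl hR le_rfl
    rw [hIz, mul_zero, mul_zero] at h1
    have hx0 : |h x| ≤ 0 :=
      le_trans (hmem 0 le_rfl hR.le x (mem_closedBall_self le_rfl)) h1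
    have : |h x| = 0 := le_antisymm hx0 (abs_nonneg _)
    rw [this, Real.zero_rpow hp.ne', hIz, mul_zero]
  · have hIpos : 0 < I := lt_of_le_of_ne hI0 (Ne.symm hIz)
    set B : ℝ := 2 ^ (2 * n) * I / (ν * R ^ n) with hB
    have hBpos : 0 < B := by positivity
    set s : ℕ → ℝ := fun k => R * (1 - (2:ℝ)⁻¹ ^ (k + 1)) with hsdef
    have hpow1 : ∀ k : ℕ, (2:ℝ)⁻¹ ^ k ≤ 1 := fun k =>
      pow_le_one₀ (by norm_num) (by norm_num)
    have hs_nonneg : ∀ k, 0 ≤ s k := by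
      intro k
      have := hpow1 (k + 1)
      simp only [hsdef]
      nlinarith
    have hs_le : ∀ k, s k ≤ R := by
      intro k
      have : (0:ℝ) < (2:ℝ)⁻¹ ^ (k + 1) := by positivity
      simp only [hsdef]
      nlinarith
    have hs_lt : ∀ k, s k < s (k + 1) := by
      intro k
      have h2 : (2:ℝ)⁻¹ ^ (k + 2) < (2:ℝ)⁻¹ ^ (k + 1) :=
        pow_lt_pow_right_of_lt_one₀ (by norm_num) (by norm_num) (by omega)
      simp only [hsdef]
      nlinarith
    have hs_diff : ∀ k, s (k + 1) - s k = R * (2:ℝ)⁻¹ ^ (k + 2) := by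
      intro k
      simp only [hsdef]
      ring
    -- the recurrence in convenient form
    have hrec2 : ∀ k, m (s k) ≤ B * (2:ℝ) ^ ((n:ℝ) * k) * m (s (k + 1)) ^ q := by
      intro k
      have h1 := hrec (s k) (s (k + 1)) (hs_nonneg k) (hs_lt k) (hs_le (k + 1))
      rw [hs_diff k] at h1
      refine h1.trans (le_of_eq ?_)
      have h2 : (2:ℝ) ^ ((n:ℝ) * k) = (2:ℝ) ^ (n * k : ℕ) := by
        rw [← Real.rpow_natCast 2 (n * k)]
        push_cast
        ring_nf
      rw [h2, hB]
      have hRn : (0:ℝ) < R ^ n := by positivity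
      have h3 : (ν * (R * (2:ℝ)⁻¹ ^ (k + 2)) ^ n)⁻¹ =
          2 ^ (2 * n) * 2 ^ (n * k : ℕ) / (ν * R ^ n) := by
        rw [mul_pow, ← pow_mul, inv_pow]
        rw [show (k + 2) * n = 2 * n + n * k by ring, pow_add]
        have h2n : ((2:ℝ) ^ (2 * n)) ≠ 0 := by positivity
        have hnk : ((2:ℝ) ^ (n * k)) ≠ 0 := by positivity
        field_simp
      rw [h3]
      ring
    -- the weighted sequence
    set α : ℕ → ℝ := fun k => (n:ℝ) * (k / p + q / p ^ 2) with hα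
    have hα0 : ∀ k, 0 ≤ α k := by
      intro k
      have hk : (0:ℝ) ≤ (k:ℝ) := Nat.cast_nonneg k
      have : (0:ℝ) ≤ (k:ℝ) / p + q / p ^ 2 := by positivity
      simp only [hα]
      positivity
    set u : ℕ → ℝ := fun k => m (s k) * (2:ℝ) ^ (-(α k)) with hu
    have hu0 : ∀ k, 0 ≤ u k := fun k =>
      mul_nonneg (hm0 _ (hs_nonneg k) (hs_le k)) (Real.rpow_nonneg (by norm_num) _)
    have hurec : ∀ k, u k ≤ B * u (k + 1) ^ q := by
      intro k
      have hmk1 : 0 ≤ m (s (k + 1)) := hm0 _ (hs_nonneg _) (hs_le _)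
      have h1 : u k ≤ (B * (2:ℝ) ^ ((n:ℝ) * k) * m (s (k + 1)) ^ q) * (2:ℝ) ^ (-(α k)) :=
        mul_le_mul_of_nonneg_right (hrec2 k) (Real.rpow_nonneg (by norm_num) _)
      refine h1.trans (le_of_eq ?_)
      have hexp : (2:ℝ) ^ ((n:ℝ) * k) * (2:ℝ) ^ (-(α k)) = (2:ℝ) ^ (-(α (k + 1)) * q) := by
        rw [← Real.rpow_add (by norm_num : (0:ℝ) < 2)]
        congr 1
        simp only [hα, hq]
        push_cast
        field_simp
        ring
      have h2 : u (k + 1) ^ q = m (s (k + 1)) ^ q * (2:ℝ) ^ (-(α (k + 1)) * q) := by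
        simp only [hu]
        rw [Real.mul_rpow hmk1 (Real.rpow_nonneg (by norm_num) _),
          ← Real.rpow_mul (by norm_num : (0:ℝ) ≤ 2)]
      rw [h2, ← hexp]
      ring
    -- uniform bound
    set C : ℝ := m R + 1 with hC
    have hC1 : 1 ≤ C := by
      have := hm0 R hR.le le_rfl
      simp only [hC]; linarith
    have hC0 : 0 < C := lt_of_lt_of_le one_pos hC1
    have huC : ∀ k, u k ≤ C := by
      intro k
      have h1 : m (s k) ≤ m R := by
        apply Real.sSup_le
        · rintro _ ⟨y, hy, rfl⟩
          exact hmem R hR.le le_rfl y ((closedBall_subset_closedBall (hs_le k)) hy)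
        · exact hm0 R hR.le le_rfl
      have h2 : (2:ℝ) ^ (-(α k)) ≤ 1 :=
        Real.rpow_le_one_of_one_le_of_nonpos (by norm_num) (neg_nonpos.mpr (hα0 k))
      calc u k ≤ m (s k) * 1 :=
            mul_le_mul_of_nonneg_left h2 (hm0 _ (hs_nonneg k) (hs_le k))
        _ ≤ C := by simp only [hC]; linarith
    -- key induction
    have key : ∀ N k, u k ≤ B ^ ((1 - q ^ N) / p) * C ^ ((q:ℝ) ^ N) := by
      intro N
      induction N with
      | zero =>
        intro k
        simpa using huC k
      | succ N ih =>
        intro k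
        have hpq : p + q = 1 := by simp [hq]
        calc u k ≤ B * u (k + 1) ^ q := hurec k
          _ ≤ B * (B ^ ((1 - q ^ N) / p) * C ^ ((q:ℝ) ^ N)) ^ q := by
              apply mul_le_mul_of_nonneg_left _ hBpos.le
              exact Real.rpow_le_rpow (hu0 _) (ih (k + 1)) hq0
          _ = B ^ ((1 - q ^ (N + 1)) / p) * C ^ ((q:ℝ) ^ (N + 1)) := by
              rw [Real.mul_rpow (Real.rpow_nonneg hBpos.le _) (Real.rpow_nonneg hC0.le _),
                ← Real.rpow_mul hBpos.le, ← Real.rpow_mul hC0.le]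
              nth_rewrite 1 [show B = B ^ (1:ℝ) from (Real.rpow_one B).symm]
              rw [← mul_assoc, ← Real.rpow_add hBpos]
              congr 2
              · field_simp
                ring
    -- pass to the limit
    have hqlim : Filter.Tendsto (fun N : ℕ => (q:ℝ) ^ N) Filter.atTop (nhds 0) :=
      tendsto_pow_atTop_nhds_zero_of_lt_one hq0 hq1
    have hcontB : Continuous (fun a : ℝ => B ^ ((1 - a) / p)) := by
      have : (fun a : ℝ => B ^ ((1 - a) / p)) =
          fun a => Real.exp (Real.log B * ((1 - a) / p)) := by
        funext a
        rw [Real.rpow_def_of_pos hBpos]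
      rw [this]; fun_prop
    have hcontC : Continuous (fun a : ℝ => C ^ a) := by
      have : (fun a : ℝ => C ^ a) = fun a => Real.exp (Real.log C * a) := by
        funext a
        rw [Real.rpow_def_of_pos hC0]
      rw [this]; fun_prop
    have hlim : Filter.Tendsto (fun N : ℕ => B ^ ((1 - q ^ N) / p) * C ^ ((q:ℝ) ^ N))
        Filter.atTop (nhds (B ^ ((1:ℝ) / p))) := by
      have := ((hcontB.mul hcontC).tendsto 0).comp hqlim
      simpa [Function.comp_def, Pi.mul_apply] using this
    have hu0le : u 0 ≤ B ^ ((1:ℝ) / p) :=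
      ge_of_tendsto hlim (Filter.Eventually.of_forall fun N => key N 0)
    -- unfold u 0
    have hm_half : m (s 0) ≤ (2:ℝ) ^ ((n:ℝ) * q / p ^ 2) * B ^ ((1:ℝ) / p) := by
      have hα0v : α 0 = (n:ℝ) * q / p ^ 2 := by
        simp only [hα]
        push_cast
        field_simp
        ring
      have h1 : m (s 0) = u 0 * (2:ℝ) ^ (α 0) := by
        simp only [hu]
        rw [mul_assoc, ← Real.rpow_add (by norm_num : (0:ℝ) < 2)]
        simp
      rw [h1, hα0v]
      calc u 0 * (2:ℝ) ^ ((n:ℝ) * q / p ^ 2)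
          ≤ B ^ ((1:ℝ) / p) * (2:ℝ) ^ ((n:ℝ) * q / p ^ 2) :=
            mul_le_mul_of_nonneg_right hu0le (Real.rpow_nonneg (by norm_num) _)
        _ = (2:ℝ) ^ ((n:ℝ) * q / p ^ 2) * B ^ ((1:ℝ) / p) := by ring
    have hxm : |h x| ≤ m (s 0) :=
      hmem (s 0) (hs_nonneg 0) (hs_le 0) x (mem_closedBall_self (hs_nonneg 0))
    have hfinal : |h x| ^ p ≤ (2:ℝ) ^ ((n:ℝ) * q / p) * B := by
      calc |h x| ^ p ≤ ((2:ℝ) ^ ((n:ℝ) * q / p ^ 2) * B ^ ((1:ℝ) / p)) ^ p :=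
            Real.rpow_le_rpow (abs_nonneg _) (hxm.trans hm_half) hp.le
        _ = (2:ℝ) ^ ((n:ℝ) * q / p) * B := by
            rw [Real.mul_rpow (Real.rpow_nonneg (by norm_num) _) (Real.rpow_nonneg hBpos.le _),
              ← Real.rpow_mul (by norm_num : (0:ℝ) ≤ 2), ← Real.rpow_mul hBpos.le,
              one_div_mul_cancel hp.ne', Real.rpow_one]
            congr 2
            field_simp
    refine hfinal.trans (le_of_eq ?_)
    rw [hB]
    ring

lemma main_ge_one {n : ℕ} (hn : 1 ≤ n) {p : ℝ} (hp1 : 1 ≤ p)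
    {D : Set (EuclideanSpace ℝ (Fin n))} {h : EuclideanSpace ℝ (Fin n) → ℝ}
    (hc : ContinuousOn h D)
    (hmvp : ∀ x r, 0 < r → closedBall x r ⊆ D →
      h x = 1 / (unitBallVol n * r ^ n) * ∫ y in ball x r, h y)
    {x : EuclideanSpace ℝ (Fin n)} {R : ℝ} (hR : 0 < R) (hsub : closedBall x R ⊆ D) :
    |h x| ^ p ≤ 1 / (unitBallVol n * R ^ n) * ∫ z in ball x R, |h z| ^ p := by
  have hν := unitBallVol_pos n
  have hp : 0 < p := lt_of_lt_of_le one_pos hp1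
  set μ := volume.restrict (ball x R) with hμ
  have hμuniv : μ univ = volume (ball x R) := by
    rw [hμ, Measure.restrict_apply_univ]
  haveI : IsFiniteMeasure μ := ⟨by rw [hμuniv]; exact measure_ball_lt_top⟩
  haveI : NeZero μ := ⟨by
    intro h0
    exact (measure_ball_pos volume x hR).ne' (Measure.restrict_eq_zero.mp h0)⟩
  have hvol : (μ univ).toReal = unitBallVol n * R ^ n := by
    rw [hμuniv, volume_ball_toReal hn x hR.le]
  have hIa : Integrable (fun z => |h z|) μ :=
    (integrableOn_abs hc hsub).mono_set ball_subset_closedBall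
  have hIp : Integrable (fun z => |h z| ^ p) μ :=
    (integrableOn_abs_rpow hc hsub hp).mono_set ball_subset_closedBall
  -- Jensen
  have hjensen : (⨍ z, |h z| ∂μ) ^ p ≤ ⨍ z, |h z| ^ p ∂μ := by
    have hg : ConvexOn ℝ (Ici 0) fun t : ℝ => t ^ p := convexOn_rpow hp1
    have hgc : ContinuousOn (fun t : ℝ => t ^ p) (Ici 0) :=
      continuousOn_id.rpow_const fun t _ => Or.inr hp.le
    exact hg.map_average_le hgc isClosed_Ici
      (Filter.Eventually.of_forall fun z => mem_Ici.mpr (abs_nonneg _)) hIa hIp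
  have havg : |h x| ≤ ⨍ z, |h z| ∂μ := by
    have hmv := hmvp x R hR hsub
    rw [average_eq, measureReal_def, hvol, smul_eq_mul]
    calc |h x| = 1 / (unitBallVol n * R ^ n) * |∫ z in ball x R, h z| := by
          rw [hmv, abs_mul, abs_of_pos (by positivity : (0:ℝ) < 1 / (unitBallVol n * R ^ n))]
      _ ≤ (unitBallVol n * R ^ n)⁻¹ * ∫ z, |h z| ∂μ := by
          rw [one_div]
          apply mul_le_mul_of_nonneg_left _ (by positivity)
          simpa [Real.norm_eq_abs, hμ] using
            norm_integral_le_integral_norm (μ := μ) h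
  have havg0 : 0 ≤ ⨍ z, |h z| ∂μ := by
    rw [average_eq, smul_eq_mul]
    exact mul_nonneg (by positivity) (integral_nonneg fun z => abs_nonneg _)
  calc |h x| ^ p ≤ (⨍ z, |h z| ∂μ) ^ p := Real.rpow_le_rpow (abs_nonneg _) havg hp.le
    _ ≤ ⨍ z, |h z| ^ p ∂μ := hjensen
    _ = 1 / (unitBallVol n * R ^ n) * ∫ z in ball x R, |h z| ^ p := by
        rw [average_eq, measureReal_def, hvol, smul_eq_mul, one_div, hμ]

/-- If `h : D → ℝ` is harmonic on a domain `D ⊆ ℝⁿ`, `n ≥ 2`, and `p > 0`, then `|h|^p` is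
quasi-nearly subharmonic: there is `K ≥ 1`, depending only on `n` and `p`, with
`|h(x)|^p ≤ (K/(νₙ rⁿ)) ∫_{B(x,r)} |h(y)|^p dm(y)` for all closed balls `B̄(x,r) ⊆ D`. -/
theorem abs_harmonic_rpow_quasiNearlySubharmonic
    {n : ℕ} (hn : 2 ≤ n) (p : ℝ) (hp : 0 < p) :
    ∃ K : ℝ, 1 ≤ K ∧
      ∀ (D : Set (EuclideanSpace ℝ (Fin n))), IsOpen D → IsConnected D →
        ∀ h : EuclideanSpace ℝ (Fin n) → ℝ, HarmonicOnSet h D →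
          ∀ x r, 0 < r → closedBall x r ⊆ D →
            |h x| ^ p ≤ K / (unitBallVol n * r ^ n) * ∫ y in ball x r, |h y| ^ p := by
  refine ⟨max 1 ((2:ℝ) ^ ((n:ℝ) * (1 - p) / p) * 2 ^ (2 * n)), le_max_left _ _, ?_⟩
  intro D hD hconn h hh x r hr hsub
  have hν := unitBallVol_pos n
  have hn1 : 1 ≤ n := by omega
  have hI0 : 0 ≤ ∫ y in ball x r, |h y| ^ p :=
    setIntegral_nonneg measurableSet_ball fun z _ => Real.rpow_nonneg (abs_nonneg _) p
  have hpos : (0:ℝ) < unitBallVol n * r ^ n := by positivity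
  rcases le_or_gt p 1 with hp1 | hp1
  · refine (main_le_one hn1 hp hp1 hh.1 hh.2 hr hsub).trans ?_
    refine mul_le_mul_of_nonneg_right ?_ hI0
    gcongr
    exact le_max_right _ _
  · refine (main_ge_one hn1 hp1.le hh.1 hh.2 hr hsub).trans ?_
    refine mul_le_mul_of_nonneg_right ?_ hI0
    gcongr
    exact le_max_left _ _
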